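/- Let W be the smallest nonnegative concave majorant of g̃ := (g/φ) ∘ s̃^{-1} on [s̃(l), s̃(r)], where s̃ = ψ/φ is continuous and strictly increasing. Then the value function of the optimal stopping problem with killing rate α satisfies V(x) = φ(x)·W(s̃(x)) for all x ∈ [l, r]. -/

import Mathlib

open Set

/-- `f/φ` is `s̃`-concave on `[l,r]`:
`(f/φ)(x) ≥ (f/φ)(l')·(s̃(r')−s̃(x))/(s̃(r')−s̃(l')) + (f/φ)(r')·(s̃(x)−s̃(l'))/(s̃(r')−s̃(l'))`
for all `l' ≤ x ≤ r'` in `[l,r]`. -/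
def IsSTildeConcave (l r : ℝ) (stilde φ f : ℝ → ℝ) : Prop :=
  ∀ l' ∈ Set.Icc l r, ∀ x ∈ Set.Icc l r, ∀ r' ∈ Set.Icc l r,
    l' ≤ x → x ≤ r' → l' < r' →
      (f l' / φ l') * ((stilde r' - stilde x) / (stilde r' - stilde l')) +
          (f r' / φ r') * ((stilde x - stilde l') / (stilde r' - stilde l'))
        ≤ f x / φ x

/-- let `W` be the smallest nonnegative concave majorant of
`g̃ = (g/φ) ∘ s̃⁻¹` on `[s̃(l), s̃(r)]`, where `s̃ = ψ/φ` is continuous and strictly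
increasing (`ψ` increasing, `φ` decreasing, both positive `α`-harmonic functions).
Then the value function `V` of the optimal stopping problem with killing rate `α` —
characterised as the minimal majorant of `g` such that `V/φ` is `s̃`-concave —
satisfies `V(x) = φ(x)·W(s̃(x))` for all `x ∈ [l, r]`. -/
theorem value_eq_phi_mul_concave_majorant
    (l r : ℝ) (hlr : l < r) (α : ℝ) (hα : 0 < α)
    (ψ φ stilde : ℝ → ℝ)
    (hψpos : ∀ x ∈ Set.Icc l r, 0 < ψ x) (hφpos : ∀ x ∈ Set.Icc l r, 0 < φ x)
    (hψmono : MonotoneOn ψ (Set.Icc l r)) (hφanti : AntitoneOn φ (Set.Icc l r))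
    (hstilde : ∀ x ∈ Set.Icc l r, stilde x = ψ x / φ x)
    (hscont : ContinuousOn stilde (Set.Icc l r))
    (hsmono : StrictMonoOn stilde (Set.Icc l r))
    (g V : ℝ → ℝ)
    -- `g̃ = (g/φ) ∘ s̃⁻¹` on `[s̃(l), s̃(r)]`
    (gtilde : ℝ → ℝ) (hgtilde : ∀ x ∈ Set.Icc l r, gtilde (stilde x) = g x / φ x)
    -- `W` is the smallest nonnegative concave majorant of `g̃` on `[s̃(l), s̃(r)]`
    (W : ℝ → ℝ)
    (hWconc : ConcaveOn ℝ (Set.Icc (stilde l) (stilde r)) W)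
    (hWnn : ∀ y ∈ Set.Icc (stilde l) (stilde r), 0 ≤ W y)
    (hWmaj : ∀ y ∈ Set.Icc (stilde l) (stilde r), gtilde y ≤ W y)
    (hWmin : ∀ W' : ℝ → ℝ, ConcaveOn ℝ (Set.Icc (stilde l) (stilde r)) W' →
      (∀ y ∈ Set.Icc (stilde l) (stilde r), 0 ≤ W' y) →
      (∀ y ∈ Set.Icc (stilde l) (stilde r), gtilde y ≤ W' y) →
      ∀ y ∈ Set.Icc (stilde l) (stilde r), W y ≤ W' y)
    -- `V` is the minimal majorant of `g` on `[l,r]` such that `V/φ` is `s̃`-concave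
    (hVnn : ∀ x ∈ Set.Icc l r, 0 ≤ V x)
    (hVmaj : ∀ x ∈ Set.Icc l r, g x ≤ V x)
    (hVconc : IsSTildeConcave l r stilde φ V)
    (hVmin : ∀ U : ℝ → ℝ, (∀ x ∈ Set.Icc l r, 0 ≤ U x) →
      (∀ x ∈ Set.Icc l r, g x ≤ U x) → IsSTildeConcave l r stilde φ U →
      ∀ x ∈ Set.Icc l r, V x ≤ U x) :
    ∀ x ∈ Set.Icc l r, V x = φ x * W (stilde x) := by
  classical
  have hsurj : Set.Icc (stilde l) (stilde r) ⊆ stilde '' Set.Icc l r :=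
    intermediate_value_Icc hlr.le hscont
  set σ : ℝ → ℝ := fun y =>
    if h : y ∈ Set.Icc (stilde l) (stilde r) then (hsurj h).choose else l with hσdef
  have hσmem : ∀ y ∈ Set.Icc (stilde l) (stilde r), σ y ∈ Set.Icc l r := by
    intro y hy
    simp only [hσdef, dif_pos hy]
    exact (hsurj hy).choose_spec.1
  have hσval : ∀ y ∈ Set.Icc (stilde l) (stilde r), stilde (σ y) = y := by
    intro y hy
    simp only [hσdef, dif_pos hy]
    exact (hsurj hy).choose_spec.2
  have hmemself : ∀ x ∈ Set.Icc l r, stilde x ∈ Set.Icc (stilde l) (stilde r) := by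
    intro x hx
    exact ⟨hsmono.monotoneOn (left_mem_Icc.2 hlr.le) hx hx.1,
           hsmono.monotoneOn hx (right_mem_Icc.2 hlr.le) hx.2⟩
  have hσinv : ∀ x ∈ Set.Icc l r, σ (stilde x) = x := by
    intro x hx
    exact hsmono.injOn (hσmem _ (hmemself x hx)) hx (hσval _ (hmemself x hx))
  -- candidate concave majorant W' of gtilde
  set W' : ℝ → ℝ := fun y => V (σ y) / φ (σ y) with hW'def
  -- key concavity estimate for W'
  have key : ∀ x ∈ Set.Icc (stilde l) (stilde r), ∀ y ∈ Set.Icc (stilde l) (stilde r),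
      x < y → ∀ a b : ℝ, 0 ≤ a → 0 ≤ b → a + b = 1 →
      a * W' x + b * W' y ≤ W' (a * x + b * y) := by
    intro x hx y hy hxy a b ha hb hab
    have hm : a * x + b * y ∈ Set.Icc (stilde l) (stilde r) := by
      have h1 := mul_le_mul_of_nonneg_left hx.1 ha
      have h2 := mul_le_mul_of_nonneg_left hy.1 hb
      have h3 := mul_le_mul_of_nonneg_left hx.2 ha
      have h4 := mul_le_mul_of_nonneg_left hy.2 hb
      have h0l : (a + b) * stilde l = stilde l := by rw [hab, one_mul]
      have h0r : (a + b) * stilde r = stilde r := by rw [hab, one_mul]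
      constructor <;> nlinarith
    have hl'mem := hσmem _ hx
    have hr'mem := hσmem _ hy
    have hmmem := hσmem _ hm
    have hsl' := hσval _ hx
    have hsr' := hσval _ hy
    have hsm := hσval _ hm
    -- order of preimages
    have hlrlt : σ x < σ y := by
      by_contra h
      push_neg at h
      rcases eq_or_lt_of_le h with h | h
      · rw [← hsl', ← hsr', h] at hxy; exact lt_irrefl _ hxy
      · have := hsmono hr'mem hl'mem h
        rw [hsl', hsr'] at this
        exact absurd hxy (not_lt_of_gt this)
    have hxm : x ≤ a * x + b * y := by
      have h5 : a * x + b * y - x = b * (y - x) := by linear_combination x * hab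
      nlinarith [mul_nonneg hb (sub_nonneg.2 hxy.le)]
    have hmy : a * x + b * y ≤ y := by
      have h5 : y - (a * x + b * y) = a * (y - x) := by linear_combination (-y) * hab
      nlinarith [mul_nonneg ha (sub_nonneg.2 hxy.le)]
    have hl'm : σ x ≤ σ (a * x + b * y) := by
      by_contra h
      push_neg at h
      have := hsmono hmmem hl'mem h
      rw [hsl', hsm] at this
      exact absurd hxm (not_le_of_gt this)
    have hmr' : σ (a * x + b * y) ≤ σ y := by
      by_contra h
      push_neg at h
      have := hsmono hr'mem hmmem h
      rw [hsr', hsm] at this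
      exact absurd hmy (not_le_of_gt this)
    have hV := hVconc (σ x) hl'mem (σ (a * x + b * y)) hmmem (σ y) hr'mem hl'm hmr' hlrlt
    rw [hsl', hsr', hsm] at hV
    have hyx : y - x ≠ 0 := sub_ne_zero.2 (ne_of_gt hxy)
    have hc1 : (y - (a * x + b * y)) / (y - x) = a := by
      rw [div_eq_iff hyx]
      linear_combination (-y) * hab
    have hc2 : ((a * x + b * y) - x) / (y - x) = b := by
      rw [div_eq_iff hyx]
      linear_combination x * hab
    rw [hc1, hc2] at hV
    calc a * W' x + b * W' y = V (σ x) / φ (σ x) * a + V (σ y) / φ (σ y) * b := by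
          simp only [hW'def]; ring
      _ ≤ V (σ (a * x + b * y)) / φ (σ (a * x + b * y)) := hV
      _ = W' (a * x + b * y) := rfl
  have hW'conc : ConcaveOn ℝ (Set.Icc (stilde l) (stilde r)) W' := by
    refine ⟨convex_Icc _ _, ?_⟩
    intro x hx y hy a b ha hb hab
    simp only [smul_eq_mul]
    rcases lt_trichotomy x y with h | h | h
    · exact key x hx y hy h a b ha hb hab
    · subst h
      have e1 : a * x + b * x = x := by linear_combination x * hab
      have e2 : a * W' x + b * W' x = W' x := by linear_combination (W' x) * hab
      rw [e1, e2]
    · have := key y hy x hx h b a hb ha (by linarith)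
      calc a * W' x + b * W' y = b * W' y + a * W' x := by ring
        _ ≤ W' (b * y + a * x) := this
        _ = W' (a * x + b * y) := by rw [add_comm]
  have hW'nn : ∀ y ∈ Set.Icc (stilde l) (stilde r), 0 ≤ W' y := by
    intro y hy
    exact div_nonneg (hVnn _ (hσmem _ hy)) (hφpos _ (hσmem _ hy)).le
  have hW'maj : ∀ y ∈ Set.Icc (stilde l) (stilde r), gtilde y ≤ W' y := by
    intro y hy
    have h1 : gtilde y = g (σ y) / φ (σ y) := by
      have h2 := hgtilde (σ y) (hσmem _ hy)
      rwa [hσval _ hy] at h2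
    rw [h1]
    exact (div_le_div_iff_of_pos_right (hφpos _ (hσmem _ hy))).2 (hVmaj _ (hσmem _ hy))
  have hWle := hWmin W' hW'conc hW'nn hW'maj
  -- the candidate U(x) = φ(x) W(stilde x)
  set U : ℝ → ℝ := fun x => φ x * W (stilde x) with hUdef
  have hUnn : ∀ x ∈ Set.Icc l r, 0 ≤ U x := by
    intro x hx
    exact mul_nonneg (hφpos x hx).le (hWnn _ (hmemself x hx))
  have hUmaj : ∀ x ∈ Set.Icc l r, g x ≤ U x := by
    intro x hx
    have h1 : g x / φ x ≤ W (stilde x) := by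
      rw [← hgtilde x hx]
      exact hWmaj _ (hmemself x hx)
    have hφ := hφpos x hx
    calc g x = φ x * (g x / φ x) := by field_simp
      _ ≤ φ x * W (stilde x) := by
          exact mul_le_mul_of_nonneg_left h1 hφ.le
  have hUconc : IsSTildeConcave l r stilde φ U := by
    intro l' hl' x hx r' hr' h1 h2 h3
    have hφl := (hφpos l' hl').ne'
    have hφr := (hφpos r' hr').ne'
    have hφx := (hφpos x hx).ne'
    simp only [hUdef]
    rw [mul_div_cancel_left₀ _ hφl, mul_div_cancel_left₀ _ hφr, mul_div_cancel_left₀ _ hφx]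
    have hslr : stilde l' < stilde r' := hsmono hl' hr' h3
    have hd : (0:ℝ) < stilde r' - stilde l' := sub_pos.2 hslr
    have hlx : stilde l' ≤ stilde x := hsmono.monotoneOn hl' hx h1
    have hxr : stilde x ≤ stilde r' := hsmono.monotoneOn hx hr' h2
    have ha : 0 ≤ (stilde r' - stilde x) / (stilde r' - stilde l') :=
      div_nonneg (by linarith) hd.le
    have hb : 0 ≤ (stilde x - stilde l') / (stilde r' - stilde l') :=
      div_nonneg (by linarith) hd.le
    have hab : (stilde r' - stilde x) / (stilde r' - stilde l') +
        (stilde x - stilde l') / (stilde r' - stilde l') = 1 := by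
      field_simp
      ring
    have hcomb : (stilde r' - stilde x) / (stilde r' - stilde l') * stilde l' +
        (stilde x - stilde l') / (stilde r' - stilde l') * stilde r' = stilde x := by
      field_simp
      ring
    have := hWconc.2 (hmemself l' hl') (hmemself r' hr') ha hb hab
    simp only [smul_eq_mul] at this
    rw [hcomb] at this
    calc W (stilde l') * ((stilde r' - stilde x) / (stilde r' - stilde l')) +
          W (stilde r') * ((stilde x - stilde l') / (stilde r' - stilde l'))
        = (stilde r' - stilde x) / (stilde r' - stilde l') * W (stilde l') +
          (stilde x - stilde l') / (stilde r' - stilde l') * W (stilde r') := by ring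
      _ ≤ W (stilde x) := this
  have hVleU := hVmin U hUnn hUmaj hUconc
  intro x hx
  have h1 : V x ≤ φ x * W (stilde x) := hVleU x hx
  have h2 : φ x * W (stilde x) ≤ V x := by
    have := hWle (stilde x) (hmemself x hx)
    rw [hW'def] at this
    simp only [hσinv x hx] at this
    have hφ := hφpos x hx
    calc φ x * W (stilde x) ≤ φ x * (V x / φ x) :=
          mul_le_mul_of_nonneg_left this hφ.le
      _ = V x := by field_simp
  linarith
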